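/- Let σ > 0 and α, r ∈ ℝ with Δ := (σ²/2 − α)² + 2σ²r > 0, and let d₁ < d₂ be the roots of P(d) := (σ²/2)d² + (α − σ²/2)d − r (so P(0) = −r). Let x, a, b > 0. Let Φ be the standard normal CDF and define, for c > 0 and t > 0, H(t; c) := Φ( (1/(σ√t))·log(c/x) + σ((d₁+d₂)/2)·√t ). Then lim_{t→∞} e^{−rt} ( H(t; b) − H(t; a) ) = 0. -/

import Mathlib

open MeasureTheory Set Filter ProbabilityTheory Real

/-- The standard normal cumulative distribution function. -/
noncomputable def stdNormalCDF (y : ℝ) : ℝ :=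
  ((ProbabilityTheory.gaussianReal 0 1) (Set.Iic y)).toReal


lemma cdf_diff_eq (q p : ℝ) :
    stdNormalCDF p - stdNormalCDF q = ∫ ξ in q..p, gaussianPDFReal 0 1 ξ := by
  have h1 : ∀ y : ℝ, stdNormalCDF y = ∫ ξ in Iic y, gaussianPDFReal 0 1 ξ := by
    intro y
    rw [stdNormalCDF, gaussianReal_apply_eq_integral 0 one_ne_zero,
      ENNReal.toReal_ofReal]
    exact setIntegral_nonneg measurableSet_Iic fun ξ _ => gaussianPDFReal_nonneg 0 1 ξ
  rw [h1, h1]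
  exact intervalIntegral.integral_Iic_sub_Iic
    ((integrable_gaussianPDFReal 0 1).restrict) ((integrable_gaussianPDFReal 0 1).restrict)

lemma cdf_diff_le (q p D : ℝ) (hqp : q ≤ p)
    (hD : ∀ ξ ∈ Icc q p, gaussianPDFReal 0 1 ξ ≤ D) :
    stdNormalCDF p - stdNormalCDF q ≤ D * (p - q) := by
  rw [cdf_diff_eq, intervalIntegral.integral_of_le hqp]
  calc ∫ ξ in Ioc q p, gaussianPDFReal 0 1 ξ ≤ ∫ _ in Ioc q p, D := by
        refine setIntegral_mono_on ((integrable_gaussianPDFReal 0 1).restrict)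
          (integrableOn_const measure_Ioc_lt_top.ne) measurableSet_Ioc ?_
        exact fun ξ hξ => hD ξ (Ioc_subset_Icc_self hξ)
    _ = D * (p - q) := by
        simp [Real.volume_Ioc, ENNReal.toReal_ofReal (sub_nonneg.2 hqp), mul_comm, hqp]

lemma cdf_abs_diff_le (q p D : ℝ)
    (hD : ∀ ξ ∈ Icc (min q p) (max q p), gaussianPDFReal 0 1 ξ ≤ D) :
    |stdNormalCDF p - stdNormalCDF q| ≤ D * |p - q| := by
  rcases le_total q p with h | h
  · rw [abs_of_nonneg (sub_nonneg.2 ?_), abs_of_nonneg (sub_nonneg.2 h)]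
    · exact cdf_diff_le q p D h (by rwa [min_eq_left h, max_eq_right h] at hD)
    · unfold stdNormalCDF
      exact ENNReal.toReal_mono (measure_ne_top _ _) (measure_mono (Iic_subset_Iic.2 h))
  · rw [abs_sub_comm, abs_sub_comm p q, abs_of_nonneg (sub_nonneg.2 ?_),
      abs_of_nonneg (sub_nonneg.2 h)]
    · exact cdf_diff_le p q D h (by rwa [min_eq_right h, max_eq_left h] at hD)
    · unfold stdNormalCDF
      exact ENNReal.toReal_mono (measure_ne_top _ _) (measure_mono (Iic_subset_Iic.2 h))

lemma pdf_bound (c L ξ : ℝ) (h : |ξ - c| ≤ L) :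
    gaussianPDFReal 0 1 ξ ≤ (Real.sqrt (2 * π))⁻¹ * Real.exp (-(c ^ 2 - 2 * |c| * L) / 2) := by
  have hsq : c ^ 2 - 2 * |c| * L ≤ ξ ^ 2 := by
    have h1 : -(c * (ξ - c)) ≤ |c| * L := by
      calc -(c * (ξ - c)) ≤ |c * (ξ - c)| := neg_le_abs _
        _ = |c| * |ξ - c| := abs_mul _ _
        _ ≤ |c| * L := by exact mul_le_mul_of_nonneg_left h (abs_nonneg c)
    nlinarith [sq_nonneg (ξ - c)]
  rw [gaussianPDFReal]
  simp only [NNReal.coe_one, mul_one, sub_zero]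
  gcongr (Real.sqrt (2*π))⁻¹ * Real.exp ?_
  linarith


set_option maxHeartbeats 1000000

/-- For any `a, b > 0`, `e^{−rt}(H(t;b) − H(t;a)) → 0` as `t → ∞`, where
`H(t;c) = Φ((1/(σ√t)) log(c/x) + σ(d₁+d₂)/2·√t)` (case `β = 0`; `r` may be negative). -/
theorem stmt_13 (σ α r : ℝ) (hσ : 0 < σ)
    (hΔ : 0 < (σ ^ 2 / 2 - α) ^ 2 + 2 * σ ^ 2 * r)
    (d₁ d₂ : ℝ)
    (hd₁ : d₁ = ((σ ^ 2 / 2 - α) - Real.sqrt ((σ ^ 2 / 2 - α) ^ 2 + 2 * σ ^ 2 * r)) / σ ^ 2)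
    (hd₂ : d₂ = ((σ ^ 2 / 2 - α) + Real.sqrt ((σ ^ 2 / 2 - α) ^ 2 + 2 * σ ^ 2 * r)) / σ ^ 2)
    (x a b : ℝ) (hx : 0 < x) (ha : 0 < a) (hb : 0 < b) :
    Tendsto
      (fun t : ℝ =>
        Real.exp (-r * t) *
          (stdNormalCDF
              ((1 / (σ * Real.sqrt t)) * Real.log (b / x) +
                σ * ((d₁ + d₂) / 2) * Real.sqrt t) -
            stdNormalCDF
              ((1 / (σ * Real.sqrt t)) * Real.log (a / x) +
                σ * ((d₁ + d₂) / 2) * Real.sqrt t)))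
      atTop (nhds 0) := by
  set s : ℝ := σ * ((d₁ + d₂) / 2) with hs
  have hσ2 : (σ : ℝ) ^ 2 ≠ 0 := by positivity
  have hsum : d₁ + d₂ = 2 * (σ ^ 2 / 2 - α) / σ ^ 2 := by
    rw [hd₁, hd₂]; ring
  have hsval : s = (σ ^ 2 / 2 - α) / σ := by
    rw [hs, hsum]; field_simp
  have hκ : 0 < r + s ^ 2 / 2 := by
    have : r + s ^ 2 / 2 = ((σ ^ 2 / 2 - α) ^ 2 + 2 * σ ^ 2 * r) / (2 * σ ^ 2) := by
      rw [hsval]; field_simp; ring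
    rw [this]; positivity
  set L : ℝ := (|Real.log (b / x)| + |Real.log (a / x)|) / σ + 1 with hL
  have hL0 : 0 < L := by positivity
  set g : ℝ → ℝ := fun t =>
    (2 * L * (Real.sqrt (2 * π))⁻¹) * Real.exp (-(r + s ^ 2 / 2) * t + |s| * L * Real.sqrt t)
    with hg
  have hgto : Tendsto g atTop (nhds 0) := by
    have hE : Tendsto (fun t : ℝ => -(r + s ^ 2 / 2) * t + |s| * L * Real.sqrt t) atTop atBot := by
      have heq : ∀ᶠ t : ℝ in atTop,
          Real.sqrt t * (|s| * L - (r + s ^ 2 / 2) * Real.sqrt t)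
            = -(r + s ^ 2 / 2) * t + |s| * L * Real.sqrt t := by
        filter_upwards [eventually_ge_atTop (0 : ℝ)] with t ht
        have : Real.sqrt t * Real.sqrt t = t := Real.mul_self_sqrt ht
        nlinarith [this]
      have sqrtT : Tendsto Real.sqrt atTop atTop := by
        rw [show Real.sqrt = fun x : ℝ => x ^ (1/2 : ℝ) from funext Real.sqrt_eq_rpow]
        exact tendsto_rpow_atTop (by norm_num)
      refine Tendsto.congr' heq (Tendsto.atTop_mul_atBot₀ ?_ ?_)
      · exact sqrtT
      · have h2 : Tendsto (fun t : ℝ => (r + s ^ 2 / 2) * Real.sqrt t) atTop atTop :=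
          sqrtT.const_mul_atTop hκ
        have h3 := tendsto_neg_atTop_atBot.comp h2
        have h4 := tendsto_atBot_add_const_left atTop (|s| * L) h3
        exact h4.congr (fun t => by simp [Function.comp, sub_eq_add_neg])
    have h5 := (Real.tendsto_exp_atBot.comp hE).const_mul (2 * L * (Real.sqrt (2 * π))⁻¹)
    rw [mul_zero] at h5
    exact h5
  apply squeeze_zero_norm' _ hgto
  filter_upwards [eventually_ge_atTop (1 : ℝ)] with t ht
  have ht0 : (0 : ℝ) ≤ t := by linarith
  have hu1 : (1 : ℝ) ≤ Real.sqrt t := by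
    rw [show (1:ℝ) = Real.sqrt 1 by simp]; exact Real.sqrt_le_sqrt ht
  have hu0 : (0 : ℝ) < Real.sqrt t := by linarith
  set u := Real.sqrt t
  set p := (1 / (σ * u)) * Real.log (b / x) + s * u with hp
  set q := (1 / (σ * u)) * Real.log (a / x) + s * u with hq
  set c := s * u with hc
  have hpc : |p - c| ≤ L := by
    rw [hp, hc, add_sub_cancel_right, abs_mul, abs_of_nonneg (by positivity : (0:ℝ) ≤ 1/(σ*u))]
    rw [hL]
    have h1 : 1 / (σ * u) ≤ 1 / σ :=
      one_div_le_one_div_of_le hσ (by nlinarith)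
    calc 1 / (σ * u) * |Real.log (b / x)| ≤ 1 / σ * |Real.log (b / x)| :=
          mul_le_mul_of_nonneg_right h1 (abs_nonneg _)
      _ ≤ (|Real.log (b / x)| + |Real.log (a / x)|) / σ + 1 := by
          rw [one_div, inv_mul_eq_div]
          have : |Real.log (b / x)| / σ ≤ (|Real.log (b / x)| + |Real.log (a / x)|) / σ := by
            gcongr
            linarith [abs_nonneg (Real.log (a / x))]
          linarith
  have hqc : |q - c| ≤ L := by
    rw [hq, hc, add_sub_cancel_right, abs_mul, abs_of_nonneg (by positivity : (0:ℝ) ≤ 1/(σ*u))]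
    rw [hL]
    have h1 : 1 / (σ * u) ≤ 1 / σ :=
      one_div_le_one_div_of_le hσ (by nlinarith)
    calc 1 / (σ * u) * |Real.log (a / x)| ≤ 1 / σ * |Real.log (a / x)| :=
          mul_le_mul_of_nonneg_right h1 (abs_nonneg _)
      _ ≤ (|Real.log (b / x)| + |Real.log (a / x)|) / σ + 1 := by
          rw [one_div, inv_mul_eq_div]
          have : |Real.log (a / x)| / σ ≤ (|Real.log (b / x)| + |Real.log (a / x)|) / σ := by
            gcongr
            linarith [abs_nonneg (Real.log (b / x))]
          linarith
  set D := (Real.sqrt (2 * π))⁻¹ * Real.exp (-(c ^ 2 - 2 * |c| * L) / 2) with hD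
  have hbound : |stdNormalCDF p - stdNormalCDF q| ≤ D * |p - q| := by
    apply cdf_abs_diff_le
    intro ξ hξ
    apply pdf_bound c L ξ
    rw [abs_sub_le_iff]
    constructor
    · calc ξ - c ≤ max q p - c := by
            have := hξ.2; linarith
        _ ≤ L := by
            rcases max_cases q p with ⟨h1, _⟩ | ⟨h1, _⟩ <;> rw [h1]
            · linarith [abs_le.1 hqc]
            · linarith [abs_le.1 hpc]
    · calc c - ξ ≤ c - min q p := by
            have := hξ.1; linarith
        _ ≤ L := by
            rcases min_cases q p with ⟨h1, _⟩ | ⟨h1, _⟩ <;> rw [h1]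
            · linarith [abs_le.1 hqc]
            · linarith [abs_le.1 hpc]
  have hpq : |p - q| ≤ 2 * L := by
    calc |p - q| = |(p - c) - (q - c)| := by ring_nf
      _ ≤ |p - c| + |q - c| := abs_sub _ _
      _ ≤ 2 * L := by linarith
  have hcsq : c ^ 2 = s ^ 2 * t := by
    rw [hc, mul_pow, Real.sq_sqrt ht0]
  have habs : |c| = |s| * u := by rw [hc, abs_mul, abs_of_pos hu0]
  calc ‖Real.exp (-r * t) * (stdNormalCDF p - stdNormalCDF q)‖
      = Real.exp (-r * t) * |stdNormalCDF p - stdNormalCDF q| := by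
        rw [norm_mul, Real.norm_eq_abs, Real.norm_eq_abs, abs_of_pos (Real.exp_pos _)]
    _ ≤ Real.exp (-r * t) * (D * (2 * L)) := by
        apply mul_le_mul_of_nonneg_left _ (Real.exp_pos _).le
        calc |stdNormalCDF p - stdNormalCDF q| ≤ D * |p - q| := hbound
          _ ≤ D * (2 * L) := by
              apply mul_le_mul_of_nonneg_left hpq
              rw [hD]; positivity
    _ = (2 * L * (Real.sqrt (2 * π))⁻¹) *
          (Real.exp (-r * t) * Real.exp (-(c ^ 2 - 2 * |c| * L) / 2)) := by
        rw [hD]; ring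
    _ = g t := by
        rw [hg, ← Real.exp_add, hcsq, habs]
        ring_nf
        rfl
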